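/- Let p : Fin 2 → Fin 2 → Fin 2 → Fin 2 → ℝ (arguments a, b, x, y) satisfy p a b x y ≥ 0 for all a, b, x, y and ∑_{a,b} p a b x y = 1 for each fixed x, y. Let s : Fin 2 → ℝ with 0 ≤ s x ≤ 1. Define P₀ := (1/4) * ∑ over all (a,b,x,y) with a + b ≡ x*y (mod 2) of p a b x y, and P₁ := (1/4) * ∑ over all (a,b,x,y) with a + b ≡ x*y (mod 2) of (s x * p a b x y + (1 − s x) * p (a+1) b x y), where a+1 is addition mod 2. Then P₁ ≤ max(P₀, 3/2 − P₀). (This is the combinatorial content of the paper's Result 4, inequality (52): in quantum theory with Absoluteness of Measurement, the CHSH-type quantity P₁ obtained after Wigner's unitary on Alice's Lab, whose unitary coefficients satisfy |α^x_{a,a}|² = s_x and |α^x_{a⊕1,a}|² = 1 − s_x, is bounded by max{P₀, 3/2 − P₀}.) -/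

import Mathlib

lemma helper_10 (A0 A1 s0 s1 P₀ P₁ : ℝ)
    (hA00 : 0 ≤ A0) (hA02 : A0 ≤ 2) (hA10 : 0 ≤ A1) (hA12 : A1 ≤ 2)
    (hs00 : 0 ≤ s0) (hs01 : s0 ≤ 1) (hs10 : 0 ≤ s1) (hs11 : s1 ≤ 1)
    (h0 : P₀ = (A0 + A1) / 4)
    (h1 : P₁ = (s0 * A0 + (1 - s0) * (2 - A0) + s1 * A1 + (1 - s1) * (2 - A1)) / 4) :
    P₁ ≤ max P₀ (3/2 - P₀) := by
  rcases le_total 1 A0 with c0 | c0 <;> rcases le_total 1 A1 with c1 | c1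
  · refine le_max_of_le_left ?_
    nlinarith [mul_nonneg (by linarith : (0:ℝ) ≤ 1 - s0) (by linarith : (0:ℝ) ≤ A0 - 1),
      mul_nonneg (by linarith : (0:ℝ) ≤ 1 - s1) (by linarith : (0:ℝ) ≤ A1 - 1)]
  · refine le_max_of_le_right ?_
    nlinarith [mul_nonneg (by linarith : (0:ℝ) ≤ 1 - s0) (by linarith : (0:ℝ) ≤ A0 - 1),
      mul_nonneg hs10 (by linarith : (0:ℝ) ≤ 1 - A1)]
  · refine le_max_of_le_right ?_
    nlinarith [mul_nonneg hs00 (by linarith : (0:ℝ) ≤ 1 - A0),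
      mul_nonneg (by linarith : (0:ℝ) ≤ 1 - s1) (by linarith : (0:ℝ) ≤ A1 - 1)]
  · refine le_max_of_le_right ?_
    nlinarith [mul_nonneg hs00 (by linarith : (0:ℝ) ≤ 1 - A0),
      mul_nonneg hs10 (by linarith : (0:ℝ) ≤ 1 - A1)]

/-- Combinatorial content of Result 4, inequality (52): the CHSH quantity `P₁`
after Wigner's unitary is bounded by `max{P₀, 3/2 − P₀}`. -/
theorem stmt_10 (p : Fin 2 → Fin 2 → Fin 2 → Fin 2 → ℝ)
    (hp : ∀ a b x y, 0 ≤ p a b x y)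
    (hnorm : ∀ x y, ∑ a, ∑ b, p a b x y = 1)
    (s : Fin 2 → ℝ) (hs0 : ∀ x, 0 ≤ s x) (hs1 : ∀ x, s x ≤ 1)
    (P₀ P₁ : ℝ)
    (hP₀ : P₀ = (1/4) * ∑ a, ∑ b, ∑ x, ∑ y,
      if a + b = x * y then p a b x y else 0)
    (hP₁ : P₁ = (1/4) * ∑ a, ∑ b, ∑ x, ∑ y,
      if a + b = x * y then s x * p a b x y + (1 - s x) * p (a + 1) b x y else 0) :
    P₁ ≤ max P₀ (3/2 - P₀) := by
  have n00 := hnorm 0 0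
  have n01 := hnorm 0 1
  have n10 := hnorm 1 0
  have n11 := hnorm 1 1
  simp only [Fin.sum_univ_two] at n00 n01 n10 n11 hP₀ hP₁
  norm_num at hP₀ hP₁
  simp only [show ((2:Fin 2) = 0) = True by decide, show ((2:Fin 2) = 1) = False by decide,
    if_true, if_false, show (2:Fin 2) = 0 by decide, show ((0:Fin 2) = 1) = False by decide,
    show ((1:Fin 2) + 1 = 0) = True by decide, show (1:Fin 2) + 1 = 0 by decide] at hP₀ hP₁
  set A0 : ℝ := p 0 0 0 0 + p 0 0 0 1 + p 1 1 0 0 + p 1 1 0 1 with hA0def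
  set A1 : ℝ := p 0 0 1 0 + p 0 1 1 1 + p 1 1 1 0 + p 1 0 1 1 with hA1def
  apply helper_10 A0 A1 (s 0) (s 1) P₀ P₁
  · linarith [hp 0 0 0 0, hp 0 0 0 1, hp 1 1 0 0, hp 1 1 0 1]
  · nlinarith [hp 0 1 0 0, hp 1 0 0 0, hp 0 1 0 1, hp 1 0 0 1]
  · linarith [hp 0 0 1 0, hp 0 1 1 1, hp 1 1 1 0, hp 1 0 1 1]
  · nlinarith [hp 0 1 1 0, hp 1 0 1 0, hp 0 0 1 1, hp 1 1 1 1]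
  · exact hs0 0
  · exact hs1 0
  · exact hs0 1
  · exact hs1 1
  · linarith
  · linear_combination hP₁ + ((1 - s 0)/4) * (n00 + n01) + ((1 - s 1)/4) * (n10 + n11)
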